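/- Let D > 0 be the discriminant of a real quadratic field, δ a positive integer with D − 4δ a perfect square, and let α_0, α_1, β_0, β_1 ∈ Z and c_K be as in the CM-field setup with both real embeddings of the relative discriminant Disc_{K/F}(η) negative and N_{F/Q}(Disc_{K/F}(η)) = D̃ not a square. Let n ∈ Z satisfy δ^2·D̃ − n^2 > 0 and 2D | (n + c_K δ). Define d_u(n) := (α_1 δ)^2 + 2δ(n + c_K δ)/D. Then d_u(n) < 0. -/

import Mathlib

/-- With `D > 0` the discriminant of a real quadratic field, `δ > 0` with `D − 4δ` a square,
`c_K` the integer with `4c_K = 4α₀² + 4α₀α₁D + α₁²(D²−D) − 16β₀ − 8β₁D`, both real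
embeddings `e₁, e₂` of `Disc_{K/F}(η) = c_K + α₁²D/2 ± √D(α₀α₁ + α₁²D/2 − 2β₁)` negative
with product `D̃` not a square, and `n` with `δ²D̃ − n² > 0` and `2D ∣ n + c_Kδ`, the
quantity `d_u(n) = (α₁δ)² + 2δ(n + c_Kδ)/D` is negative. -/
theorem stmt12 (D δ α₀ α₁ β₀ β₁ cK n Dt : ℤ)
    (hD : 0 < D) (hδ : 0 < δ) (hsq : ∃ m : ℤ, D - 4 * δ = m ^ 2)
    (hcK : 4 * cK = 4 * α₀ ^ 2 + 4 * α₀ * α₁ * D + α₁ ^ 2 * (D ^ 2 - D)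
      - 16 * β₀ - 8 * β₁ * D)
    (e₁ e₂ : ℝ)
    (he₁ : e₁ = (cK : ℝ) + (α₁ : ℝ) ^ 2 * (D : ℝ) / 2 +
      Real.sqrt (D : ℝ) * ((α₀ : ℝ) * (α₁ : ℝ) + (α₁ : ℝ) ^ 2 * (D : ℝ) / 2 - 2 * (β₁ : ℝ)))
    (he₂ : e₂ = (cK : ℝ) + (α₁ : ℝ) ^ 2 * (D : ℝ) / 2 -
      Real.sqrt (D : ℝ) * ((α₀ : ℝ) * (α₁ : ℝ) + (α₁ : ℝ) ^ 2 * (D : ℝ) / 2 - 2 * (β₁ : ℝ)))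
    (hneg₁ : e₁ < 0) (hneg₂ : e₂ < 0) (hprod : e₁ * e₂ = (Dt : ℝ))
    (hDtns : ¬ ∃ m : ℤ, Dt = m ^ 2)
    (hpos : 0 < δ ^ 2 * Dt - n ^ 2) (hdvd : 2 * D ∣ (n + cK * δ)) :
    ((α₁ * δ : ℤ) : ℚ) ^ 2 + 2 * (δ : ℚ) * ((n : ℚ) + (cK : ℚ) * (δ : ℚ)) / (D : ℚ) < 0 := by
  -- real quantities
  set s : ℝ := (cK : ℝ) + (α₁ : ℝ) ^ 2 * (D : ℝ) / 2 with hs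
  have hsum : e₁ + e₂ = 2 * s := by rw [he₁, he₂]; ring
  have hsneg : s < 0 := by nlinarith
  have hDtpos : (0 : ℝ) < (Dt : ℝ) := by rw [← hprod]; exact mul_pos_of_neg_of_neg hneg₁ hneg₂
  have hDtposZ : (0 : ℤ) < Dt := by exact_mod_cast hDtpos
  have hs2 : (Dt : ℝ) ≤ s ^ 2 := by nlinarith [sq_nonneg (e₁ - e₂)]
  have hsle : Real.sqrt (Dt : ℝ) ≤ -s := by
    have h1 : Real.sqrt (Dt : ℝ) ≤ Real.sqrt (s ^ 2) := Real.sqrt_le_sqrt hs2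
    have h2 : Real.sqrt (s ^ 2) = -s := by
      rw [Real.sqrt_sq_eq_abs, abs_of_neg hsneg]
    linarith
  have hδR : (0 : ℝ) < (δ : ℝ) := by exact_mod_cast hδ
  have hn : (n : ℝ) < (δ : ℝ) * Real.sqrt (Dt : ℝ) := by
    have h1 : ((n : ℝ)) ^ 2 < ((δ : ℝ) * Real.sqrt (Dt : ℝ)) ^ 2 := by
      have : ((δ : ℝ) * Real.sqrt (Dt : ℝ)) ^ 2 = (δ : ℝ) ^ 2 * (Dt : ℝ) := by
        rw [mul_pow, Real.sq_sqrt hDtpos.le]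
      rw [this]
      have hposR : (0:ℝ) < (δ:ℝ) ^ 2 * (Dt:ℝ) - (n:ℝ) ^ 2 := by exact_mod_cast hpos
      nlinarith
    have h2 : 0 ≤ (δ : ℝ) * Real.sqrt (Dt : ℝ) :=
      mul_nonneg hδR.le (Real.sqrt_nonneg _)
    nlinarith [abs_nonneg (n : ℝ), sq_abs (n : ℝ), le_abs_self (n : ℝ)]
  -- key real inequality
  have hkey : (n : ℝ) + (δ : ℝ) * s < 0 := by nlinarith
  -- the integer numerator is negative
  have hX : α₁ ^ 2 * δ ^ 2 * D + 2 * δ * (n + cK * δ) < 0 := by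
    have : ((α₁ ^ 2 * δ ^ 2 * D + 2 * δ * (n + cK * δ) : ℤ) : ℝ) < 0 := by
      push_cast
      rw [hs] at hkey
      nlinarith
    exact_mod_cast this
  have hDQ : (0 : ℚ) < (D : ℚ) := by exact_mod_cast hD
  have hXQ : ((α₁ : ℚ) ^ 2 * (δ : ℚ) ^ 2 * (D : ℚ) + 2 * δ * ((n : ℚ) + cK * δ)) < 0 := by
    exact_mod_cast hX
  have heq : ((α₁ * δ : ℤ) : ℚ) ^ 2 + 2 * (δ : ℚ) * ((n : ℚ) + (cK : ℚ) * (δ : ℚ)) / (D : ℚ)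
      = ((α₁ : ℚ) ^ 2 * (δ : ℚ) ^ 2 * (D : ℚ) + 2 * δ * ((n : ℚ) + cK * δ)) / (D : ℚ) := by
    push_cast
    field_simp
  rw [heq]
  exact div_neg_of_neg_of_pos hXQ hDQ
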